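/- Let G be a finite additive abelian group and let Σ=(Γ=(V,E),σ) be a signed graph with an orientation ω compatible with σ. Then the number q_Σ(G) of nowhere-zero G-flows of Σ is given by q_Σ(G) = Σ_{A⊆E} (−1)^{|E∖A|} · |G|^{|A|−|V|+k_b(Σ\A^c)} · (|G|/|2G|)^{k_u(Σ\A^c)}. -/

import Mathlib

attribute [local instance] Classical.propDecidable

noncomputable section SignedGraphs

/-- A signed graph: a multigraph with ordered pairs of endpoints (the order is
an artefact of the encoding) together with a sign `±1` on each edge. -/
structure SGraph (V : Type*) (E : Type*) where
  ends : E → V × V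
  sign : E → ℤˣ

namespace SGraph

variable {V E : Type*}

/-- Endpoint of `e` on side `b`; a loop has both endpoints equal, but its two
half-edges are distinguished by the side `b`. -/
def endpt (Γ : SGraph V E) (e : E) (b : Bool) : V :=
  cond b (Γ.ends e).1 (Γ.ends e).2

/-- `e` is a loop of the underlying graph. -/
def IsLoop (Γ : SGraph V E) (e : E) : Prop := (Γ.ends e).1 = (Γ.ends e).2

/-- Walks in a signed multigraph: a step traverses an edge `e` in direction `d`
(from the side-`d` endpoint to the other endpoint). -/
inductive Walk (Γ : SGraph V E) : V → V → Type _
  | nil (v : V) : Walk Γ v v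
  | cons (e : E) (d : Bool) {w : V} (p : Walk Γ (Γ.endpt e (!d)) w) : Walk Γ (Γ.endpt e d) w

namespace Walk

variable {Γ : SGraph V E}

/-- The list of vertices visited by a walk (including the final one). -/
def verts : ∀ {u v : V}, Γ.Walk u v → List V
  | _, _, .nil x => [x]
  | _, _, .cons e d p => Γ.endpt e d :: p.verts

/-- The list of edges traversed by a walk. -/
def edges : ∀ {u v : V}, Γ.Walk u v → List E
  | _, _, .nil _ => []
  | _, _, .cons e _ p => e :: p.edges

/-- The list of (edge, direction) steps of a walk. -/
def steps : ∀ {u v : V}, Γ.Walk u v → List (E × Bool)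
  | _, _, .nil _ => []
  | _, _, .cons e d p => (e, d) :: p.steps

/-- The sources of the steps of a walk, i.e. all visited vertices except the last. -/
def srcs {u v : V} (W : Γ.Walk u v) : List V := W.verts.dropLast

/-- The sign of a walk: the product of the signs of its edges. -/
def sgn : ∀ {u v : V}, Γ.Walk u v → ℤˣ
  | _, _, .nil _ => 1
  | _, _, .cons e _ p => Γ.sign e * p.sgn

/-- Concatenation of walks. -/
def append : ∀ {u v w : V}, Γ.Walk u v → Γ.Walk v w → Γ.Walk u w
  | _, _, _, .nil _, q => q
  | _, _, _, .cons e d p, q => .cons e d (p.append q)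

/-- The sum `Σᵢ f(eᵢ)` of the values of `f` on the edges of the walk,
with multiplicity. -/
def edgeSum {G : Type*} [AddCommGroup G] (f : E → G) {u v : V} (W : Γ.Walk u v) : G :=
  (W.edges.map f).sum

/-- The sum `Σᵢ ω(vᵢ,eᵢ)·(Π_{j<i} σ(eⱼ))·f(eᵢ)` along a walk, where `ω(vᵢ,eᵢ)`
is the value of `ω` on the half-edge by which the walk leaves `vᵢ`. -/
def tensionSum {G : Type*} [AddCommGroup G] (ω : E → Bool → ℤˣ) (f : E → G) :
    ∀ {u v : V}, Γ.Walk u v → G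
  | _, _, .nil _ => 0
  | _, _, .cons e d p => ((ω e d : ℤ) • f e) + ((Γ.sign e : ℤ) • tensionSum ω f p)

/-- `Q` is the reverse of the walk `P`. -/
def IsReverseOf {u v : V} (Q : Γ.Walk v u) (P : Γ.Walk u v) : Prop :=
  Q.steps = P.steps.reverse.map fun s => (s.1, !s.2)

end Walk

/-- A closed walk is a cycle if it is nontrivial, visits no vertex twice and
uses no edge twice. -/
def IsCycle (Γ : SGraph V E) {v : V} (W : Γ.Walk v v) : Prop :=
  W.edges ≠ [] ∧ W.srcs.Nodup ∧ W.edges.Nodup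

/-- A balanced (positive) cycle. -/
def IsBalancedCycle (Γ : SGraph V E) {v : V} (W : Γ.Walk v v) : Prop :=
  Γ.IsCycle W ∧ W.sgn = 1

/-- An unbalanced (negative) cycle. -/
def IsUnbalancedCycle (Γ : SGraph V E) {v : V} (W : Γ.Walk v v) : Prop :=
  Γ.IsCycle W ∧ W.sgn = -1

/-- A nontrivial walk that is a simple path (all visited vertices distinct). -/
def IsPathWalk (Γ : SGraph V E) {u v : V} (P : Γ.Walk u v) : Prop :=
  P.edges ≠ [] ∧ P.verts.Nodup

/-- A tight handcuff at `v`: two edge-disjoint unbalanced cycles sharing exactly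
the vertex `v`. -/
def IsTightHandcuff (Γ : SGraph V E) {v : V} (C₁ C₂ : Γ.Walk v v) : Prop :=
  Γ.IsUnbalancedCycle C₁ ∧ Γ.IsUnbalancedCycle C₂ ∧
    (∀ x ∈ C₁.srcs, x ∈ C₂.srcs → x = v) ∧ ∀ e ∈ C₁.edges, e ∉ C₂.edges

/-- A loose handcuff: two vertex-disjoint unbalanced cycles `C₁` (at `u`) and
`C₂` (at `w`) joined by a simple path `P` from `u` to `w` meeting the cycles
exactly in its endpoints. -/
def IsLooseHandcuff (Γ : SGraph V E) {u w : V} (C₁ : Γ.Walk u u) (P : Γ.Walk u w)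
    (C₂ : Γ.Walk w w) : Prop :=
  Γ.IsUnbalancedCycle C₁ ∧ Γ.IsUnbalancedCycle C₂ ∧ Γ.IsPathWalk P ∧
    (∀ x ∈ C₁.srcs, x ∉ C₂.srcs) ∧
    (∀ x ∈ P.verts, x ∈ C₁.srcs → x = u) ∧
    (∀ x ∈ P.verts, x ∈ C₂.srcs → x = w) ∧
    ∀ e ∈ P.edges, e ∉ C₁.edges ∧ e ∉ C₂.edges

/-- The canonical closed walks traversing a circuit of the signed graph:
a balanced cycle, a tight handcuff `C₁ * C₂`, or a loose handcuff
`C₁ * P * C₂ * P⁻¹` (the circuit path edges being used twice). -/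
def IsBasicCircuitWalk (Γ : SGraph V E) {v : V} (W : Γ.Walk v v) : Prop :=
  Γ.IsBalancedCycle W ∨
    (∃ C₁ C₂ : Γ.Walk v v, Γ.IsTightHandcuff C₁ C₂ ∧ W = C₁.append C₂) ∨
    ∃ (w : V) (C₁ : Γ.Walk v v) (P : Γ.Walk v w) (C₂ : Γ.Walk w w) (Q : Γ.Walk w v),
      Γ.IsLooseHandcuff C₁ P C₂ ∧ Q.IsReverseOf P ∧
        W = C₁.append (P.append (C₂.append Q))

/-- A circuit walk: a rotation of a basic circuit walk. -/
def IsCircuitWalk (Γ : SGraph V E) {v : V} (W : Γ.Walk v v) : Prop :=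
  ∃ (u : V) (A : Γ.Walk u v) (B : Γ.Walk v u),
    W = B.append A ∧ Γ.IsBasicCircuitWalk (A.append B)

/-- `e` is a circuit path edge: it lies on the connecting path of an unbalanced
loose handcuff. -/
def IsCircuitPathEdge (Γ : SGraph V E) (e : E) : Prop :=
  ∃ (u w : V) (C₁ : Γ.Walk u u) (P : Γ.Walk u w) (C₂ : Γ.Walk w w),
    Γ.IsLooseHandcuff C₁ P C₂ ∧ e ∈ P.edges

/-- Adjacency via an edge. -/
def Adj (Γ : SGraph V E) (a b : V) : Prop := ∃ e, Γ.ends e = (a, b) ∨ Γ.ends e = (b, a)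

/-- The set of connected components. -/
def Components (Γ : SGraph V E) : Type _ := Quot Γ.Adj

/-- The connected component of a vertex. -/
def comp (Γ : SGraph V E) (v : V) : Γ.Components := Quot.mk _ v

/-- The number `k(Γ)` of connected components. -/
def kAll (Γ : SGraph V E) : ℕ := Nat.card Γ.Components

/-- A connected component is balanced if every cycle it contains is balanced. -/
def IsBalancedComponent (Γ : SGraph V E) (c : Γ.Components) : Prop :=
  ∀ v : V, Γ.comp v = c → ∀ W : Γ.Walk v v, Γ.IsCycle W → W.sgn = 1

/-- The number `k_b(Σ)` of balanced connected components. -/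
def kb (Γ : SGraph V E) : ℕ := Nat.card {c : Γ.Components // Γ.IsBalancedComponent c}

/-- The number `k_u(Σ)` of unbalanced connected components. -/
def ku (Γ : SGraph V E) : ℕ := Nat.card {c : Γ.Components // ¬ Γ.IsBalancedComponent c}

/-- A signed graph is balanced if all its cycles are balanced. -/
def Balanced (Γ : SGraph V E) : Prop :=
  ∀ (v : V) (W : Γ.Walk v v), Γ.IsCycle W → W.sgn = 1

/-- A signed graph is connected if it has exactly one connected component. -/
def Connected (Γ : SGraph V E) : Prop := Γ.kAll = 1

/-- The spanning subgraph `Σ \ Aᶜ` with edge set `A`. -/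
def restrict (Γ : SGraph V E) (A : Set E) : SGraph V A :=
  { ends := fun e => Γ.ends e, sign := fun e => Γ.sign e }

/-- The signed Tutte polynomial (as a function of `x`, `y`, `z`):
`T_Σ(X,Y,Z) = Σ_{A⊆E} (X−1)^{k(Σ\Aᶜ)−k(Σ)} (Y−1)^{|A|−|V|+k_b(Σ\Aᶜ)} (Z−1)^{k_u(Σ\Aᶜ)}`. -/
def signedTutte {K : Type*} [CommRing K] (Γ : SGraph V E) (x y z : K) : K :=
  ∑ᶠ A : Finset E,
    (x - 1) ^ ((Γ.restrict (A : Set E)).kAll - Γ.kAll) *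
      (y - 1) ^ ((A.card + (Γ.restrict (A : Set E)).kb) - Nat.card V) *
        (z - 1) ^ (Γ.restrict (A : Set E)).ku

/-- Deletion of an edge. -/
def deleteEdge (Γ : SGraph V E) (e : E) : SGraph V {e' : E // e' ≠ e} :=
  { ends := fun e' => Γ.ends e'.1, sign := fun e' => Γ.sign e'.1 }

/-- The relation identifying the two endpoints of `e`. -/
def contractRel (Γ : SGraph V E) (e : E) (a b : V) : Prop := (a, b) = Γ.ends e

/-- Contraction of an edge: the two endpoints are identified and the edge is
deleted.  (For a loop this is just deletion, as the identification is trivial.) -/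
def contract (Γ : SGraph V E) (e : E) : SGraph (Quot (Γ.contractRel e)) {e' : E // e' ≠ e} :=
  { ends := fun e' => (Quot.mk _ (Γ.ends e'.1).1, Quot.mk _ (Γ.ends e'.1).2),
    sign := fun e' => Γ.sign e'.1 }

/-- `e` is a bridge: its deletion increases the number of connected components. -/
def IsBridge (Γ : SGraph V E) (e : E) : Prop := Γ.kAll < (Γ.deleteEdge e).kAll

/-- An orientation of the half-edges, compatible with the signature. -/
def IsCompatible (Γ : SGraph V E) (ω : E → Bool → ℤˣ) : Prop :=
  ∀ e, Γ.sign e = -(ω e true * ω e false)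

/-- A `G`-flow: Kirchhoff's law holds at every vertex. -/
def IsFlow (Γ : SGraph V E) (ω : E → Bool → ℤˣ) {G : Type*} [AddCommGroup G]
    (f : E → G) : Prop :=
  ∀ v : V,
    (∑ᶠ e : E, ((if Γ.endpt e true = v then (ω e true : ℤ) • f e else 0) +
      (if Γ.endpt e false = v then (ω e false : ℤ) • f e else 0))) = 0

/-- A `G`-tension: the alternating sum along every circuit walk vanishes. -/
def IsTension (Γ : SGraph V E) (ω : E → Bool → ℤˣ) {G : Type*} [AddCommGroup G]
    (f : E → G) : Prop :=
  ∀ (v : V) (W : Γ.Walk v v), Γ.IsCircuitWalk W → W.tensionSum ω f = 0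

end SGraph

/-- The doubling homomorphism `x ↦ x + x = 2x` of an abelian group. -/
def doubleHom (G : Type*) [AddCommGroup G] : G →+ G :=
  AddMonoidHom.mk' (fun x => x + x) (fun a b => add_add_add_comm a b a b)

/-- The subgroup `2G = {2x : x ∈ G}`. -/
def twoG (G : Type*) [AddCommGroup G] : AddSubgroup G := (doubleHom G).range

/-- The `2`-torsion subgroup `G₂ = {x ∈ G : 2x = 0}`. -/
def torsion2 (G : Type*) [AddCommGroup G] : AddSubgroup G := (doubleHom G).ker

namespace SGraph

variable {V E : Type*}

/-- A `G`-potential difference: a `G`-tension whose sum around every unbalanced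
cycle lies in `2G`. -/
def IsPotentialDifference (Γ : SGraph V E) (ω : E → Bool → ℤˣ) {G : Type*} [AddCommGroup G]
    (f : E → G) : Prop :=
  Γ.IsTension ω f ∧
    ∀ (v : V) (W : Γ.Walk v v), Γ.IsUnbalancedCycle W → W.edgeSum f ∈ twoG G

end SGraph

namespace SGraph

variable {V E : Type*}

/-- Proper coloring by elements of a set `X` with involution `ι`: adjacent
endpoints of a positive edge get different colors, and for a negative edge the
`ι`-image of one endpoint's color differs from the other endpoint's color. -/
def IsProperInvColoring (Γ : SGraph V E) {X : Type*} (ι : X → X) (f : V → X) : Prop :=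
  ∀ e : E, (Γ.sign e = 1 → f ((Γ.ends e).1) ≠ f ((Γ.ends e).2)) ∧
    (Γ.sign e = -1 → ι (f ((Γ.ends e).1)) ≠ f ((Γ.ends e).2))

/-- A proper `G`-coloring: for every edge `e = uv`, `f(u) ≠ f(v)` if `e` is
positive and `-f(u) ≠ f(v)` if `e` is negative, i.e. `σ(e)•f(u) ≠ f(v)`. -/
def IsProperColoring (Γ : SGraph V E) {G : Type*} [AddCommGroup G] (f : V → G) : Prop :=
  ∀ e : E, ((Γ.sign e : ℤ) • f ((Γ.ends e).1)) ≠ f ((Γ.ends e).2)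

/-- Zaslavsky's proper `n`-coloring: colors in `{0, ±1, …, ±n}` with
`f(u) ≠ σ(e)·f(v)` for every edge `e = uv`. -/
def IsProperNColoring (Γ : SGraph V E) (n : ℕ) (f : V → ℤ) : Prop :=
  (∀ v, |f v| ≤ (n : ℤ)) ∧
    ∀ e : E, f ((Γ.ends e).1) ≠ (Γ.sign e : ℤ) * f ((Γ.ends e).2)

/-- `T ⊆ E` is a spanning tree: the spanning subgraph `(V,T)` is connected and
contains no cycle. -/
def IsSpanningTree (Γ : SGraph V E) (T : Set E) : Prop :=
  (Γ.restrict T).Connected ∧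
    ∀ (v : V) (W : (Γ.restrict T).Walk v v), ¬ (Γ.restrict T).IsCycle W

/-- A connected basis of a connected signed graph: a spanning tree if `Σ` is
balanced; otherwise a spanning tree plus one extra edge closing an unbalanced
cycle. -/
def IsConnectedBasis (Γ : SGraph V E) (B : Set E) : Prop :=
  (Γ.Balanced ∧ Γ.IsSpanningTree B) ∨
    (¬ Γ.Balanced ∧ ∃ (T : Set E) (e : E), Γ.IsSpanningTree T ∧ e ∉ T ∧ B = insert e T ∧
      ∀ (v : V) (W : (Γ.restrict B).Walk v v), (Γ.restrict B).IsCycle W → W.sgn = -1)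

/-- Switching at a vertex `v`: the sign of every non-loop edge incident with `v`
is negated; loops keep their sign. -/
def switchAt (Γ : SGraph V E) (v : V) : SGraph V E :=
  { ends := Γ.ends,
    sign := fun e => if ((Γ.ends e).1 = v ↔ (Γ.ends e).2 = v) then Γ.sign e else -Γ.sign e }

/-- Switching at a set `S` of vertices (the composite of the switchings at the
vertices of `S`): the sign of an edge is negated iff exactly one of its
endpoints lies in `S`. -/
def switchSet (Γ : SGraph V E) (S : Set V) : SGraph V E :=
  { ends := Γ.ends,
    sign := fun e => if ((Γ.ends e).1 ∈ S ↔ (Γ.ends e).2 ∈ S) then Γ.sign e else -Γ.sign e }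

/-- Isomorphism of signed graphs (as undirected signed multigraphs). -/
def Iso {V₁ E₁ V₂ E₂ : Type*} (Γ₁ : SGraph V₁ E₁) (Γ₂ : SGraph V₂ E₂) : Prop :=
  ∃ (φ : V₁ ≃ V₂) (ψ : E₁ ≃ E₂), ∀ e : E₁,
    (Γ₂.ends (ψ e) = (φ (Γ₁.ends e).1, φ (Γ₁.ends e).2) ∨
      Γ₂.ends (ψ e) = (φ (Γ₁.ends e).2, φ (Γ₁.ends e).1)) ∧
    Γ₂.sign (ψ e) = Γ₁.sign e

/-- Switching equivalence: isomorphism after switching at a set of vertices. -/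
def SwitchEquiv {V₁ E₁ V₂ E₂ : Type*} (Γ₁ : SGraph V₁ E₁) (Γ₂ : SGraph V₂ E₂) : Prop :=
  ∃ S : Set V₁, Iso (Γ₁.switchSet S) Γ₂

/-- Disjoint union of signed graphs. -/
def disjUnion {V₁ E₁ V₂ E₂ : Type*} (Γ₁ : SGraph V₁ E₁) (Γ₂ : SGraph V₂ E₂) :
    SGraph (V₁ ⊕ V₂) (E₁ ⊕ E₂) where
  ends := fun e => match e with
    | .inl e => (Sum.inl (Γ₁.ends e).1, Sum.inl (Γ₁.ends e).2)
    | .inr e => (Sum.inr (Γ₂.ends e).1, Sum.inr (Γ₂.ends e).2)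
  sign := fun e => match e with
    | .inl e => Γ₁.sign e
    | .inr e => Γ₂.sign e

/-- The difference operator `δ : G^V → G^E`,
`(δg)(e) = ω(v,e)·g(v) + ω(u,e)·g(u)` for `e = uv`. -/
def deltaHom (Γ : SGraph V E) (ω : E → Bool → ℤˣ) (G : Type*) [AddCommGroup G] :
    (V → G) →+ (E → G) :=
  AddMonoidHom.mk'
    (fun g e => (ω e true : ℤ) • g ((Γ.ends e).1) + (ω e false : ℤ) • g ((Γ.ends e).2))
    (by
      intro a b
      funext e
      simp only [Pi.add_apply, smul_add]
      abel)

end SGraph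

end SignedGraphs

section AuxProofs

open SGraph

namespace SGraph

variable {V E : Type*} {Γ : SGraph V E}

namespace Walk

@[simp] lemma verts_ne_nil : ∀ {u v : V} (W : Γ.Walk u v), W.verts ≠ []
  | _, _, .nil _ => by simp [verts]
  | _, _, .cons e d p => by simp [verts]

@[simp] lemma srcs_nil (v : V) : (Walk.nil (Γ := Γ) v).srcs = [] := rfl

@[simp] lemma srcs_cons (e : E) (d : Bool) {w : V} (p : Γ.Walk (Γ.endpt e (!d)) w) :
    (Walk.cons e d p).srcs = Γ.endpt e d :: p.srcs := by
  simp [srcs, verts, List.dropLast_cons_of_ne_nil (verts_ne_nil p)]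

@[simp] lemma nil_append {u v : V} (q : Γ.Walk u v) : (Walk.nil u).append q = q := rfl

@[simp] lemma cons_append (e : E) (d : Bool) {w x : V} (p : Γ.Walk (Γ.endpt e (!d)) w)
    (q : Γ.Walk w x) : (Walk.cons e d p).append q = Walk.cons e d (p.append q) := rfl

@[simp] lemma edges_append : ∀ {u v w : V} (p : Γ.Walk u v) (q : Γ.Walk v w),
    (p.append q).edges = p.edges ++ q.edges
  | _, _, _, .nil _, q => rfl
  | _, _, _, .cons e d p, q => by simp [edges, edges_append p q]

@[simp] lemma sgn_append : ∀ {u v w : V} (p : Γ.Walk u v) (q : Γ.Walk v w),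
    (p.append q).sgn = p.sgn * q.sgn
  | _, _, _, .nil _, q => (one_mul _).symm
  | _, _, _, .cons e d p, q => by simp [sgn, sgn_append p q, mul_assoc]

@[simp] lemma verts_append : ∀ {u v w : V} (p : Γ.Walk u v) (q : Γ.Walk v w),
    (p.append q).verts = p.srcs ++ q.verts
  | _, _, _, .nil _, q => rfl
  | _, _, _, .cons e d p, q => by simp [verts, verts_append p q]

@[simp] lemma srcs_append {u v w : V} (p : Γ.Walk u v) (q : Γ.Walk v w) :
    (p.append q).srcs = p.srcs ++ q.srcs := by
  simp [srcs, verts_append, List.dropLast_append_of_ne_nil (verts_ne_nil q)]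

/-- Change the (propositionally equal) endpoints of a walk. -/
def copy {u v u' v' : V} (W : Γ.Walk u v) (hu : u = u') (hv : v = v') : Γ.Walk u' v' :=
  hu ▸ hv ▸ W

@[simp] lemma copy_rfl_rfl {u v : V} (W : Γ.Walk u v) : W.copy rfl rfl = W := rfl

@[simp] lemma sgn_copy {u v u' v' : V} (W : Γ.Walk u v) (hu : u = u') (hv : v = v') :
    (W.copy hu hv).sgn = W.sgn := by subst hu; subst hv; rfl

@[simp] lemma edges_copy {u v u' v' : V} (W : Γ.Walk u v) (hu : u = u') (hv : v = v') :
    (W.copy hu hv).edges = W.edges := by subst hu; subst hv; rfl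

@[simp] lemma srcs_copy {u v u' v' : V} (W : Γ.Walk u v) (hu : u = u') (hv : v = v') :
    (W.copy hu hv).srcs = W.srcs := by subst hu; subst hv; rfl

/-- Reversal of a walk. -/
def reverse : ∀ {u v : V}, Γ.Walk u v → Γ.Walk v u
  | _, _, .nil x => .nil x
  | _, _, .cons e d p =>
      p.reverse.append ((Walk.cons e (!d) (.nil _)).copy rfl (by rw [Bool.not_not]))

@[simp] lemma sgn_reverse : ∀ {u v : V} (W : Γ.Walk u v), W.reverse.sgn = W.sgn
  | _, _, .nil _ => rfl
  | _, _, .cons e d p => by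
      simp [reverse, sgn, sgn_reverse p, mul_comm]

lemma sgn_eq_one_of_edges_eq_nil : ∀ {u v : V} (W : Γ.Walk u v), W.edges = [] → W.sgn = 1
  | _, _, .nil _, _ => rfl
  | _, _, .cons e d p, h => by simp [edges] at h

end Walk

lemma comp_eq_of_adj {a b : V} (h : Γ.Adj a b) : Γ.comp a = Γ.comp b := Quot.sound h

lemma adj_endpt (e : E) : Γ.Adj (Γ.endpt e true) (Γ.endpt e false) :=
  ⟨e, Or.inl rfl⟩

lemma comp_endpt (e : E) (d : Bool) : Γ.comp (Γ.endpt e d) = Γ.comp (Γ.endpt e (!d)) := by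
  cases d
  · exact (comp_eq_of_adj (adj_endpt e)).symm
  · exact comp_eq_of_adj (adj_endpt e)

lemma comp_eq_of_walk : ∀ {u v : V}, Γ.Walk u v → Γ.comp u = Γ.comp v
  | _, _, .nil _ => rfl
  | _, _, .cons e d p => (comp_endpt e d).trans (comp_eq_of_walk p)

lemma comp_eq_of_mem_verts : ∀ {u v : V} (W : Γ.Walk u v) {x : V},
    x ∈ W.verts → Γ.comp x = Γ.comp u
  | _, _, .nil _, x, hx => by
      simp [Walk.verts] at hx; subst hx; rfl
  | _, _, .cons e d p, x, hx => by
      simp [Walk.verts] at hx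
      rcases hx with h | h
      · subst h; rfl
      · exact (comp_eq_of_mem_verts p h).trans (comp_endpt e d).symm

/-- A walk between vertices in the same component, by choice. -/
lemma reachable_of_comp_eq {u v : V} (h : Γ.comp u = Γ.comp v) : Nonempty (Γ.Walk u v) := by
  have key : ∀ a b : V, Relation.EqvGen Γ.Adj a b → Nonempty (Γ.Walk a b) := by
    intro a b hab
    induction hab with
    | rel a b h =>
        obtain ⟨e, he | he⟩ := h
        · exact ⟨(Walk.cons e true (.nil _)).copy
            (by simp [endpt, he]) (by simp [endpt, he])⟩
        · exact ⟨(Walk.cons e false (.nil _)).copy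
            (by simp [endpt, he]) (by simp [endpt, he])⟩
    | refl a => exact ⟨.nil a⟩
    | symm a b _ ih => exact ⟨ih.some.reverse⟩
    | trans a b c _ _ ih₁ ih₂ => exact ⟨ih₁.some.append ih₂.some⟩
  exact key u v (Quot.eq.mp h)

end SGraph

namespace SGraph

variable {V E : Type*} {Γ : SGraph V E}

/-- Split a walk at the first occurrence of a source vertex. -/
theorem exists_split_src : ∀ {u v : V} (W : Γ.Walk u v) (x : V), x ∈ W.srcs →
    ∃ (A : Γ.Walk u x) (B : Γ.Walk x v), W = A.append B ∧ B.edges ≠ [] ∧ x ∉ A.srcs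
  | _, _, .nil _, x, hx => by simp at hx
  | _, _, .cons e d p, x, hx => by
      rw [Walk.srcs_cons, List.mem_cons] at hx
      by_cases h : Γ.endpt e d = x
      · subst h
        exact ⟨.nil _, .cons e d p, rfl, by simp [Walk.edges], by simp⟩
      · have hx' : x ∈ p.srcs := hx.resolve_left (fun hh => h hh.symm)
        obtain ⟨A, B, hW, hB, hA⟩ := exists_split_src p x hx'
        exact ⟨.cons e d A, B, by rw [hW]; rfl, hB, by
          rw [Walk.srcs_cons, List.mem_cons]; push_neg
          exact ⟨fun hh => h hh.symm, hA⟩⟩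

/-- Split a walk at the first traversal of an edge. -/
theorem exists_split_edge : ∀ {u v : V} (W : Γ.Walk u v) (e : E), e ∈ W.edges →
    ∃ (d : Bool) (A : Γ.Walk u (Γ.endpt e d)) (B : Γ.Walk (Γ.endpt e (!d)) v),
      W = A.append (Walk.cons e d B) ∧ e ∉ A.edges
  | _, _, .nil _, e, he => by simp [Walk.edges] at he
  | _, _, .cons e' d' p, e, he => by
      by_cases h : e' = e
      · subst h
        exact ⟨d', .nil _, p, rfl, by simp [Walk.edges]⟩
      · have he' : e ∈ p.edges := by
          have h2 : e = e' ∨ e ∈ p.edges := by simpa [Walk.edges] using he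
          exact h2.resolve_left (fun hh => h hh.symm)
        obtain ⟨d, A, B, hW, hA⟩ := exists_split_edge p e he'
        exact ⟨d, .cons e' d' A, B, by rw [hW]; rfl, by
          simp [Walk.edges, hA, Ne.symm h]⟩

lemma int_units_mul_self (s : ℤˣ) : s * s = 1 := by
  rcases Int.units_eq_one_or s with h | h <;> simp [h]

/-- Key structural lemma: a closed walk in a component all of whose cycles are
balanced has sign `1`. -/
theorem sgn_eq_one_of_closed : ∀ (n : ℕ) {u : V} (W : Γ.Walk u u),
    W.edges.length ≤ n →
    (∀ x : V, Γ.comp x = Γ.comp u → ∀ C : Γ.Walk x x, Γ.IsCycle C → C.sgn = 1) →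
    W.sgn = 1 := by
  intro n
  induction n with
  | zero =>
      intro u W hlen _
      exact W.sgn_eq_one_of_edges_eq_nil (List.length_eq_zero_iff.mp (Nat.le_zero.mp hlen))
  | succ n ih =>
      intro u W hlen hc
      by_cases hnil : W.edges = []
      · exact W.sgn_eq_one_of_edges_eq_nil hnil
      by_cases hsrc : W.srcs.Nodup
      · by_cases hedg : W.edges.Nodup
        · exact hc u rfl W ⟨hnil, hsrc, hedg⟩
        · -- a repeated edge, with srcs nodup
          obtain ⟨e, he2⟩ : ∃ e, 2 ≤ W.edges.count e := by
            obtain ⟨e, he⟩ := List.exists_duplicate_iff_not_nodup.mpr hedg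
            exact ⟨e, List.duplicate_iff_two_le_count.mp he⟩
          have heW : e ∈ W.edges := List.count_pos_iff.mp (by omega)
          obtain ⟨d, A, B, hW, hA⟩ := exists_split_edge W e heW
          have heB : e ∈ B.edges := by
            have : W.edges.count e = A.edges.count e + (Walk.cons e d B).edges.count e := by
              rw [hW, Walk.edges_append, List.count_append]
            rw [List.count_eq_zero_of_not_mem hA] at this
            have : 1 ≤ B.edges.count e := by
              have hcons : (Walk.cons e d B).edges.count e = 1 + B.edges.count e := by
                simp [Walk.edges, List.count_cons]
                omega
              omega
            exact List.count_pos_iff.mp this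
          obtain ⟨d₂, C, D, hB, hC⟩ := exists_split_edge B e heB
          -- d₂ = !d from srcs nodup
          have hne : Γ.endpt e d ≠ Γ.endpt e d₂ := by
            intro hcontra
            rw [hW, hB] at hsrc
            simp only [Walk.srcs_append, Walk.srcs_cons] at hsrc
            have h4 := hsrc.of_append_right
            rw [List.nodup_cons] at h4
            exact h4.1 (by rw [hcontra]; simp)
          have hd₂ : d₂ = !d := by
            cases d <;> cases d₂ <;> simp_all
          subst hd₂
          -- C is a closed walk at endpt e !d; W' := A ++ D (cast) is a closed walk at u
          have hDcast : Γ.endpt e (!!d) = Γ.endpt e d := by rw [Bool.not_not]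
          set D' : Γ.Walk (Γ.endpt e d) u := D.copy hDcast rfl with hD'
          have hcompx : Γ.comp (Γ.endpt e (!d)) = Γ.comp u := by
            have h1 : Γ.comp u = Γ.comp (Γ.endpt e d) := comp_eq_of_walk A
            rw [h1]; exact (comp_endpt e d).symm
          have hlenW : W.edges.length = A.edges.length + 1 + C.edges.length
              + 1 + D.edges.length := by
            rw [hW, hB]; simp [Walk.edges_append, Walk.edges]; omega
          have hsgnC : C.sgn = 1 := by
            refine ih C (by omega) ?_
            intro x hx C' hC'
            exact hc x (hx.trans hcompx) C' hC'
          have hsgnW' : (A.append D').sgn = 1 := by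
            refine ih (A.append D') ?_ hc
            rw [Walk.edges_append, List.length_append, Walk.edges_copy]
            omega
          have : W.sgn = C.sgn * (A.append D').sgn := by
            rw [hW, hB]
            simp only [Walk.sgn_append, Walk.sgn]
            have : D'.sgn = D.sgn := Walk.sgn_copy _ _ _
            rw [this]
            have hs := int_units_mul_self (Γ.sign e)
            rw [show A.sgn * (Γ.sign e * (C.sgn * (Γ.sign e * D.sgn)))
                = (Γ.sign e * Γ.sign e) * (C.sgn * (A.sgn * D.sgn)) by
                  simp [mul_comm, mul_left_comm, mul_assoc], hs, one_mul]
          rw [this, hsgnC, hsgnW', one_mul]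
      · -- a repeated source vertex
        obtain ⟨x, hx2⟩ : ∃ x, 2 ≤ W.srcs.count x := by
          obtain ⟨x, hx⟩ := List.exists_duplicate_iff_not_nodup.mpr hsrc
          exact ⟨x, List.duplicate_iff_two_le_count.mp hx⟩
        have hxW : x ∈ W.srcs := List.count_pos_iff.mp (by omega)
        obtain ⟨A, B, hW, hBne, hxA⟩ := exists_split_src W x hxW
        have hxB2 : 2 ≤ B.srcs.count x := by
          have : W.srcs.count x = A.srcs.count x + B.srcs.count x := by
            rw [hW, Walk.srcs_append, List.count_append]
          rw [List.count_eq_zero_of_not_mem hxA] at this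
          omega
        -- B is a nonempty walk from x; take its first step
        cases B with
        | nil =>
            exact absurd rfl hBne
        | cons e d B₀ =>
            have hxB₀ : Γ.endpt e d ∈ B₀.srcs := by
              rw [Walk.srcs_cons, List.count_cons_self] at hxB2
              exact List.count_pos_iff.mp (by omega)
            obtain ⟨C, D, hB₀, hDne, _⟩ := exists_split_src B₀ (Γ.endpt e d) hxB₀
            have hcompx : Γ.comp (Γ.endpt e d) = Γ.comp u := (comp_eq_of_walk A).symm
            have hlenW : W.edges.length = A.edges.length + 1 + C.edges.length
                + D.edges.length := by
              rw [hW, hB₀]; simp [Walk.edges_append, Walk.edges]; omega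
            have hDlen : 1 ≤ D.edges.length := by
              cases hD : D.edges with
              | nil => exact absurd hD hDne
              | cons a l => simp [hD]
            have hsgnM : (Walk.cons e d C).sgn = 1 := by
              refine ih (Walk.cons e d C) ?_ ?_
              · simp [Walk.edges]; omega
              · intro y hy C' hC'
                exact hc y (hy.trans hcompx) C' hC'
            have hsgnW' : (A.append D).sgn = 1 := by
              refine ih (A.append D) ?_ hc
              rw [Walk.edges_append, List.length_append]
              omega
            have : W.sgn = (Walk.cons e d C).sgn * (A.append D).sgn := by
              rw [hW, hB₀]
              simp only [Walk.sgn_append, Walk.sgn]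
              simp [mul_comm, mul_left_comm, mul_assoc]
            rw [this, hsgnM, hsgnW', one_mul]

/-- In a balanced component, any two walks with the same endpoints have the
same sign. -/
theorem sgn_eq_sgn_of_balanced {u v : V} (h : Γ.IsBalancedComponent (Γ.comp u))
    (W P : Γ.Walk u v) : W.sgn = P.sgn := by
  have h1 : (W.append P.reverse).sgn = 1 := by
    refine sgn_eq_one_of_closed (W.append P.reverse).edges.length _ le_rfl ?_
    intro x hx C hC
    exact h x hx C hC
  rw [Walk.sgn_append, Walk.sgn_reverse] at h1
  calc W.sgn = W.sgn * (P.sgn * P.sgn) := by rw [int_units_mul_self, mul_one]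
  _ = (W.sgn * P.sgn) * P.sgn := by rw [mul_assoc]
  _ = P.sgn := by rw [h1, one_mul]

end SGraph

noncomputable section Bdry

namespace SGraph

variable {V E : Type*}

section Boundary

variable (Γ : SGraph V E) (ω : E → Bool → ℤˣ) (G : Type*) [AddCommGroup G]

/-- The boundary map sending an edge labelling to its vertex defects. -/
def bdry [Fintype E] : (E → G) →+ (V → G) :=
  AddMonoidHom.mk'
    (fun f v => ∑ e : E,
      ((if Γ.endpt e true = v then (ω e true : ℤ) • f e else 0) +
        (if Γ.endpt e false = v then (ω e false : ℤ) • f e else 0)))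
    (by
      intro a b; funext v
      simp only [Pi.add_apply]
      rw [← Finset.sum_add_distrib]
      refine Finset.sum_congr rfl fun e _ => ?_
      simp only [Pi.add_apply, smul_add]
      split_ifs <;> abel)

lemma isFlow_iff [Fintype E] (f : E → G) : Γ.IsFlow ω f ↔ bdry Γ ω G f = 0 := by
  constructor
  · intro h; funext v
    have h2 := h v
    rw [finsum_eq_sum_of_fintype] at h2
    exact h2
  · intro h v
    rw [finsum_eq_sum_of_fintype]
    exact congrFun h v

/-- The flow pushing `x` along a walk. -/
def flowAlong : ∀ {a b : V}, Γ.Walk a b → G → (E → G)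
  | _, _, .nil _, _ => 0
  | _, _, .cons e d p, x =>
      Pi.single e (-((ω e d : ℤ) • x)) + flowAlong p ((Γ.sign e : ℤ) • x)

@[simp] lemma flowAlong_nil (v : V) (x : G) : flowAlong Γ ω G (.nil v) x = 0 := rfl

@[simp] lemma flowAlong_cons (e : E) (d : Bool) {w : V} (p : Γ.Walk (Γ.endpt e (!d)) w)
    (x : G) : flowAlong Γ ω G (.cons e d p) x
      = Pi.single e (-((ω e d : ℤ) • x)) + flowAlong Γ ω G p ((Γ.sign e : ℤ) • x) := rfl

lemma units_int_sq (s : ℤˣ) : (s : ℤ) * (s : ℤ) = 1 := by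
  rcases Int.units_eq_one_or s with h | h <;> simp [h]

lemma bdry_single [Fintype E] (e : E) (c : G) :
    bdry Γ ω G (Pi.single e c) =
      Pi.single (Γ.endpt e true) ((ω e true : ℤ) • c) +
        Pi.single (Γ.endpt e false) ((ω e false : ℤ) • c) := by
  funext v
  have hz : ∀ e' : E, e' ≠ e →
      ((if Γ.endpt e' true = v then (ω e' true : ℤ) • (Pi.single e c : E → G) e' else 0) +
        (if Γ.endpt e' false = v then (ω e' false : ℤ) • (Pi.single e c : E → G) e' else 0))
        = 0 := by
    intro e' he'
    rw [Pi.single_eq_of_ne he']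
    simp
  show (∑ e' : E, _) = _
  rw [Finset.sum_eq_single e (fun b _ hb => hz b hb) (by simp)]
  rw [Pi.single_eq_same, Pi.add_apply, Pi.single_apply, Pi.single_apply]
  congr 1 <;> (rw [eq_comm (a := v)])

lemma bdry_step [Fintype E] (hω : Γ.IsCompatible ω) (e : E) (d : Bool) (x : G) :
    bdry Γ ω G (Pi.single e (-((ω e d : ℤ) • x))) =
      Pi.single (Γ.endpt e (!d)) ((Γ.sign e : ℤ) • x) - Pi.single (Γ.endpt e d) x := by
  rw [bdry_single]
  have hsq : ∀ b : Bool, (ω e b : ℤ) • (-((ω e b : ℤ) • x)) = -x := by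
    intro b
    rw [smul_neg, smul_smul, units_int_sq, one_smul]
  have hmixFT : (ω e false : ℤ) • (-((ω e true : ℤ) • x)) = (Γ.sign e : ℤ) • x := by
    rw [smul_neg, smul_smul, ← neg_smul]
    congr 1
    have hs : Γ.sign e = -(ω e false * ω e true) := by rw [hω e, mul_comm]
    rw [hs]; push_cast; ring
  have hmixTF : (ω e true : ℤ) • (-((ω e false : ℤ) • x)) = (Γ.sign e : ℤ) • x := by
    rw [smul_neg, smul_smul, ← neg_smul]
    congr 1
    have hs : Γ.sign e = -(ω e true * ω e false) := hω e
    rw [hs]; push_cast; ring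
  cases d
  · simp only [Bool.not_false]
    rw [hsq false, hmixTF]
    funext w
    simp only [Pi.add_apply, Pi.sub_apply, Pi.single_apply]
    split_ifs <;> abel
  · simp only [Bool.not_true]
    rw [hsq true, hmixFT]
    funext w
    simp only [Pi.add_apply, Pi.sub_apply, Pi.single_apply]
    split_ifs <;> abel

lemma bdry_flowAlong [Fintype E] (hω : Γ.IsCompatible ω) :
    ∀ {a b : V} (W : Γ.Walk a b) (x : G),
      bdry Γ ω G (flowAlong Γ ω G W x) = Pi.single b ((W.sgn : ℤ) • x) - Pi.single a x
  | _, _, .nil v, x => by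
      rw [flowAlong_nil, map_zero]
      show (0 : V → G) = _
      rw [Walk.sgn]
      norm_num
  | _, _, .cons e d p, x => by
      rw [flowAlong_cons, map_add, bdry_step Γ ω G hω, bdry_flowAlong hω p _]
      have hmm : ((p.sgn : ℤ)) • ((Γ.sign e : ℤ) • x)
          = (((Walk.cons e d p).sgn : ℤ)) • x := by
        rw [smul_smul]
        show _ = ((Γ.sign e * p.sgn : ℤˣ) : ℤ) • x
        rw [Units.val_mul, mul_comm]
      rw [hmm]
      abel

end Boundary

end SGraph

end Bdry

noncomputable section CompLayer

namespace SGraph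

variable {V E : Type*}

section Comps

variable (Γ : SGraph V E)

/-- A chosen base vertex in each component. -/
def cbase (c : Γ.Components) : V := (Quot.exists_rep c).choose

lemma comp_cbase (c : Γ.Components) : Γ.comp (Γ.cbase c) = c :=
  (Quot.exists_rep c).choose_spec

/-- A chosen walk between two vertices of a component. -/
def wch {u v : V} (h : Γ.comp u = Γ.comp v) : Γ.Walk u v :=
  (reachable_of_comp_eq h).some

/-- The sign of the chosen walk from the base point of the component of `v` to `v`. -/
def sg (v : V) : ℤˣ := (Γ.wch (Γ.comp_cbase (Γ.comp v))).sgn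

lemma sg_def (v : V) : Γ.sg v = (Γ.wch (Γ.comp_cbase (Γ.comp v))).sgn := rfl

lemma comp_endpt' (e : E) : Γ.comp (Γ.endpt e false) = Γ.comp (Γ.endpt e true) :=
  (comp_endpt e true).symm

/-- In a balanced component the chosen signs form a switching function. -/
lemma sg_edge_balanced (e : E)
    (hbal : Γ.IsBalancedComponent (Γ.comp (Γ.endpt e true))) :
    Γ.sg (Γ.endpt e true) = Γ.sign e * Γ.sg (Γ.endpt e false) := by
  have hcomp : Γ.comp (Γ.endpt e false) = Γ.comp (Γ.endpt e true) := Γ.comp_endpt' e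
  have hbase : Γ.cbase (Γ.comp (Γ.endpt e false)) = Γ.cbase (Γ.comp (Γ.endpt e true)) := by
    rw [hcomp]
  set W₁ : Γ.Walk (Γ.cbase (Γ.comp (Γ.endpt e true))) (Γ.endpt e true) :=
    Γ.wch (Γ.comp_cbase (Γ.comp (Γ.endpt e true)))
  set Wv : Γ.Walk (Γ.cbase (Γ.comp (Γ.endpt e false))) (Γ.endpt e false) :=
    Γ.wch (Γ.comp_cbase (Γ.comp (Γ.endpt e false)))
  have hstep : Γ.Walk (Γ.endpt e false) (Γ.endpt e true) := Walk.cons e false (.nil _)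
  set step : Γ.Walk (Γ.endpt e false) (Γ.endpt e true) := Walk.cons e false (.nil _)
  have hbc : Γ.IsBalancedComponent
      (Γ.comp (Γ.cbase (Γ.comp (Γ.endpt e true)))) := by
    rw [Γ.comp_cbase]; exact hbal
  have key := sgn_eq_sgn_of_balanced hbc W₁ ((Wv.copy hbase rfl).append step)
  have hsg1 : Γ.sg (Γ.endpt e true) = W₁.sgn := rfl
  have hsg2 : Γ.sg (Γ.endpt e false) = Wv.sgn := rfl
  rw [hsg1, hsg2, key, Walk.sgn_append, Walk.sgn_copy]
  show Wv.sgn * (Γ.sign e * (Walk.nil _).sgn) = Γ.sign e * Wv.sgn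
  rw [Walk.sgn]
  show Wv.sgn * (Γ.sign e * 1) = _
  rw [mul_one, mul_comm]

lemma sg_edge_zero (ω : E → Bool → ℤˣ) (hω : Γ.IsCompatible ω) (e : E)
    (hbal : Γ.IsBalancedComponent (Γ.comp (Γ.endpt e true))) :
    (Γ.sg (Γ.endpt e true) : ℤ) * (ω e true : ℤ)
      + (Γ.sg (Γ.endpt e false) : ℤ) * (ω e false : ℤ) = 0 := by
  have h1 := Γ.sg_edge_balanced e hbal
  have h1' : (Γ.sg (Γ.endpt e true) : ℤ)
      = (Γ.sign e : ℤ) * (Γ.sg (Γ.endpt e false) : ℤ) := by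
    rw [h1]; push_cast; ring
  have h2 : (Γ.sign e : ℤ) = -((ω e true : ℤ) * (ω e false : ℤ)) := by
    rw [hω e]; push_cast; ring
  have h3 : (ω e true : ℤ) * (ω e true : ℤ) = 1 := units_int_sq _
  rw [h1', h2]
  linear_combination (-((Γ.sg (Γ.endpt e false) : ℤ) * (ω e false : ℤ))) * h3

lemma sg_edge_even (ω : E → Bool → ℤˣ) (e : E) :
    Even ((Γ.sg (Γ.endpt e true) : ℤ) * (ω e true : ℤ)
      + (Γ.sg (Γ.endpt e false) : ℤ) * (ω e false : ℤ)) := by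
  have h1 := Int.isUnit_iff.mp (Units.isUnit (Γ.sg (Γ.endpt e true)))
  have h2 := Int.isUnit_iff.mp (Units.isUnit (Γ.sg (Γ.endpt e false)))
  have h3 := Int.isUnit_iff.mp (Units.isUnit (ω e true))
  have h4 := Int.isUnit_iff.mp (Units.isUnit (ω e false))
  rcases h1 with h1 | h1 <;> rcases h2 with h2 | h2 <;> rcases h3 with h3 | h3 <;>
    rcases h4 with h4 | h4 <;> rw [h1, h2, h3, h4] <;> decide

variable (G : Type*) [AddCommGroup G]

/-- The component-wise weighted sum functional. -/
def lam [Fintype V] : (V → G) →+ (Γ.Components → G) :=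
  AddMonoidHom.mk'
    (fun g c => ∑ v : V, if Γ.comp v = c then (Γ.sg v : ℤ) • g v else 0)
    (by
      intro a b; funext c
      simp only [Pi.add_apply]
      rw [← Finset.sum_add_distrib]
      refine Finset.sum_congr rfl fun v _ => ?_
      split_ifs <;> simp [smul_add])

lemma lam_apply [Fintype V] (g : V → G) (c : Γ.Components) :
    lam Γ G g c = ∑ v : V, if Γ.comp v = c then (Γ.sg v : ℤ) • g v else 0 := rfl

lemma lam_surjective [Fintype V] : Function.Surjective (lam Γ G) := by
  intro h
  refine ⟨fun v => if v = Γ.cbase (Γ.comp v) then (Γ.sg v : ℤ) • h (Γ.comp v) else 0, ?_⟩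
  funext c
  rw [lam_apply]
  rw [Finset.sum_eq_single (Γ.cbase c)]
  · rw [if_pos (Γ.comp_cbase c)]
    have hb : Γ.cbase (Γ.comp (Γ.cbase c)) = Γ.cbase c := by rw [Γ.comp_cbase c]
    rw [if_pos hb.symm, Γ.comp_cbase c, smul_smul, units_int_sq, one_smul]
  · intro v _ hv
    by_cases hc : Γ.comp v = c
    · rw [if_pos hc]
      have : ¬ (v = Γ.cbase (Γ.comp v)) := by rw [hc]; exact hv
      rw [if_neg this, smul_zero]
    · rw [if_neg hc]
  · intro hmem; exact absurd (Finset.mem_univ _) hmem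

end Comps

end SGraph

end CompLayer

noncomputable section RangeLayer

namespace SGraph

variable {V E : Type*}

variable (Γ : SGraph V E) (ω : E → Bool → ℤˣ) (G : Type*) [AddCommGroup G]

/-- The constraint subgroup for each component. -/
def bSub : Γ.Components → AddSubgroup G :=
  fun c => if Γ.IsBalancedComponent c then ⊥ else twoG G

lemma bSub_apply (c : Γ.Components) :
    bSub Γ G c = if Γ.IsBalancedComponent c then ⊥ else twoG G := rfl

lemma lam_bdry [Fintype V] [Fintype E] (f : E → G) (c : Γ.Components) :
    lam Γ G (bdry Γ ω G f) c
      = ∑ e : E, if Γ.comp (Γ.endpt e true) = c then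
          ((Γ.sg (Γ.endpt e true) : ℤ) * (ω e true : ℤ)
            + (Γ.sg (Γ.endpt e false) : ℤ) * (ω e false : ℤ)) • f e else 0 := by
  rw [lam_apply]
  have step1 : ∀ v : V,
      (if Γ.comp v = c then (Γ.sg v : ℤ) • (bdry Γ ω G f v) else 0)
        = ∑ e : E, (if Γ.comp v = c then (Γ.sg v : ℤ) •
            ((if Γ.endpt e true = v then (ω e true : ℤ) • f e else 0) +
              (if Γ.endpt e false = v then (ω e false : ℤ) • f e else 0)) else 0) := by
    intro v
    split_ifs with h
    · show (Γ.sg v : ℤ) • (∑ e : E, _) = _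
      rw [Finset.smul_sum]
    · rw [Finset.sum_const_zero]
  rw [Finset.sum_congr rfl fun v _ => step1 v, Finset.sum_comm]
  refine Finset.sum_congr rfl fun e _ => ?_
  have expand : ∀ v : V,
      (if Γ.comp v = c then (Γ.sg v : ℤ) •
        ((if Γ.endpt e true = v then (ω e true : ℤ) • f e else 0) +
          (if Γ.endpt e false = v then (ω e false : ℤ) • f e else 0)) else 0)
      = (if Γ.comp v = c then (Γ.sg v : ℤ) •
          (if Γ.endpt e true = v then (ω e true : ℤ) • f e else 0) else 0)
        + (if Γ.comp v = c then (Γ.sg v : ℤ) •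
            (if Γ.endpt e false = v then (ω e false : ℤ) • f e else 0) else 0) := by
    intro v
    split_ifs <;> simp [smul_add]
  rw [Finset.sum_congr rfl fun v _ => expand v, Finset.sum_add_distrib]
  have sum1 : (∑ v : V, if Γ.comp v = c then (Γ.sg v : ℤ) •
      (if Γ.endpt e true = v then (ω e true : ℤ) • f e else 0) else 0)
      = if Γ.comp (Γ.endpt e true) = c then
          ((Γ.sg (Γ.endpt e true) : ℤ) * (ω e true : ℤ)) • f e else 0 := by
    rw [Finset.sum_eq_single (Γ.endpt e true)]
    · rw [if_pos rfl, smul_smul]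
    · intro v _ hv
      rw [if_neg (show ¬ (Γ.endpt e true = v) from fun hh => hv hh.symm), smul_zero, ite_self]
    · intro hmem; exact absurd (Finset.mem_univ _) hmem
  have sum2 : (∑ v : V, if Γ.comp v = c then (Γ.sg v : ℤ) •
      (if Γ.endpt e false = v then (ω e false : ℤ) • f e else 0) else 0)
      = if Γ.comp (Γ.endpt e true) = c then
          ((Γ.sg (Γ.endpt e false) : ℤ) * (ω e false : ℤ)) • f e else 0 := by
    rw [Finset.sum_eq_single (Γ.endpt e false)]
    · rw [if_pos rfl, smul_smul, Γ.comp_endpt' e]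
    · intro v _ hv
      rw [if_neg (show ¬ (Γ.endpt e false = v) from fun hh => hv hh.symm), smul_zero, ite_self]
    · intro hmem; exact absurd (Finset.mem_univ _) hmem
  rw [sum1, sum2]
  split_ifs with h
  · rw [← add_smul]
  · rw [add_zero]

theorem range_bdry [Fintype V] [Fintype E] (hω : Γ.IsCompatible ω) :
    (bdry Γ ω G).range = (AddSubgroup.pi Set.univ (bSub Γ G)).comap (lam Γ G) := by
  apply le_antisymm
  · rintro x ⟨f, rfl⟩
    intro c _
    rw [lam_bdry]
    refine AddSubgroup.sum_mem _ fun e _ => ?_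
    by_cases hc : Γ.comp (Γ.endpt e true) = c
    · rw [if_pos hc]
      unfold bSub
      by_cases hb : Γ.IsBalancedComponent c
      · rw [if_pos hb]
        rw [Γ.sg_edge_zero ω hω e (hc ▸ hb), zero_smul]
        exact AddSubgroup.zero_mem _
      · rw [if_neg hb]
        obtain ⟨k, hk⟩ := Γ.sg_edge_even ω e
        rw [hk, add_smul]
        exact ⟨k • f e, rfl⟩
    · rw [if_neg hc]
      exact AddSubgroup.zero_mem _
  · intro g hg
    have h1 : ∀ v : V,
        Pi.single v (g v) - Pi.single (Γ.cbase (Γ.comp v)) ((Γ.sg v : ℤ) • g v)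
          ∈ (bdry Γ ω G).range := by
      intro v
      refine ⟨flowAlong Γ ω G (Γ.wch (Γ.comp_cbase (Γ.comp v))) ((Γ.sg v : ℤ) • g v), ?_⟩
      rw [bdry_flowAlong Γ ω G hω]
      congr 1
      rw [← sg_def, smul_smul, units_int_sq, one_smul]
    have hunb : ∀ (w : V) (y : G), ¬ Γ.IsBalancedComponent (Γ.comp w) →
        Pi.single w (y + y) ∈ (bdry Γ ω G).range := by
      intro w y hb
      unfold IsBalancedComponent at hb
      push_neg at hb
      obtain ⟨v, hv, C, hC, hs⟩ := hb
      have hsC : C.sgn = -1 := (Int.units_eq_one_or C.sgn).resolve_left hs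
      have hvw : Γ.comp w = Γ.comp v := hv.symm
      set P : Γ.Walk w v := Γ.wch hvw
      set W₀ : Γ.Walk w w := P.append (C.append P.reverse)
      have hsW₀ : W₀.sgn = -1 := by
        show (P.append (C.append P.reverse)).sgn = -1
        rw [Walk.sgn_append, Walk.sgn_append, Walk.sgn_reverse, hsC,
          mul_comm (-1 : ℤˣ) P.sgn, ← mul_assoc, int_units_mul_self, one_mul]
      refine ⟨flowAlong Γ ω G W₀ (-y), ?_⟩
      rw [bdry_flowAlong Γ ω G hω, hsW₀]
      funext z
      simp only [Pi.sub_apply, Pi.single_apply]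
      split_ifs <;> simp
    haveI : Finite Γ.Components := Quot.finite _
    haveI : Fintype Γ.Components := Fintype.ofFinite _
    have h2 : ∀ c : Γ.Components,
        Pi.single (Γ.cbase c) (lam Γ G g c) ∈ (bdry Γ ω G).range := by
      intro c
      have hgc : lam Γ G g c ∈ bSub Γ G c :=
        ((AddSubgroup.mem_pi Set.univ).mp (AddSubgroup.mem_comap.mp hg)) c (Set.mem_univ c)
      by_cases hb : Γ.IsBalancedComponent c
      · rw [bSub_apply, if_pos hb] at hgc
        rw [AddSubgroup.mem_bot] at hgc
        rw [hgc, Pi.single_zero]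
        exact AddSubgroup.zero_mem _
      · rw [bSub_apply, if_neg hb] at hgc
        obtain ⟨y, hy⟩ := hgc
        have hyy : doubleHom G y = y + y := rfl
        rw [← hy, hyy]
        refine hunb (Γ.cbase c) y ?_
        rw [Γ.comp_cbase c]
        exact hb
    have key : g = (∑ v : V, (Pi.single v (g v)
          - Pi.single (Γ.cbase (Γ.comp v)) ((Γ.sg v : ℤ) • g v)))
        + ∑ c : Γ.Components, Pi.single (Γ.cbase c) (lam Γ G g c) := by
      have e1 : (∑ v : V, Pi.single v (g v) : V → G) = g := Finset.univ_sum_single g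
      have e2 : (∑ c : Γ.Components, Pi.single (Γ.cbase c) (lam Γ G g c) : V → G)
          = ∑ v : V, Pi.single (Γ.cbase (Γ.comp v)) ((Γ.sg v : ℤ) • g v) := by
        have e3 : ∀ c : Γ.Components, (Pi.single (Γ.cbase c) (lam Γ G g c) : V → G)
            = ∑ v : V, (if Γ.comp v = c then
                Pi.single (Γ.cbase c) ((Γ.sg v : ℤ) • g v) else 0) := by
          intro c
          rw [lam_apply]
          calc (Pi.single (Γ.cbase c)
                (∑ v : V, if Γ.comp v = c then (Γ.sg v : ℤ) • g v else 0) : V → G)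
              = ∑ v : V, (Pi.single (Γ.cbase c)
                  (if Γ.comp v = c then (Γ.sg v : ℤ) • g v else 0) : V → G) :=
                map_sum (AddMonoidHom.single (fun _ : V => G) (Γ.cbase c)) _ _
            _ = ∑ v : V, (if Γ.comp v = c then
                  (Pi.single (Γ.cbase c) ((Γ.sg v : ℤ) • g v) : V → G) else 0) := by
                refine Finset.sum_congr rfl fun v _ => ?_
                split_ifs
                · rfl
                · exact Pi.single_zero _
        rw [Finset.sum_congr rfl fun c _ => e3 c, Finset.sum_comm]
        refine Finset.sum_congr rfl fun v _ => ?_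
        rw [Finset.sum_ite_eq Finset.univ (Γ.comp v)
          (fun c => (Pi.single (Γ.cbase c) ((Γ.sg v : ℤ) • g v) : V → G)),
          if_pos (Finset.mem_univ _)]
      rw [Finset.sum_sub_distrib, e1, e2]
      abel
    rw [key]
    exact add_mem (AddSubgroup.sum_mem _ fun v _ => h1 v)
      (AddSubgroup.sum_mem _ fun c _ => h2 c)

end SGraph

end RangeLayer

noncomputable section CountLayer

lemma card_ker_mul_card_range {A B : Type*} [AddCommGroup A] [AddCommGroup B] [Finite A]
    (φ : A →+ B) : Nat.card φ.ker * Nat.card φ.range = Nat.card A := by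
  rw [AddSubgroup.card_eq_card_quotient_mul_card_addSubgroup φ.ker]
  rw [Nat.card_congr (QuotientAddGroup.quotientKerEquivRange φ).toEquiv]
  rw [mul_comm]

lemma card_comap_of_surjective {A B : Type*} [AddCommGroup A] [AddCommGroup B] [Finite A]
    (φ : A →+ B) (hφ : Function.Surjective φ) (S : AddSubgroup B) :
    Nat.card (S.comap φ) = Nat.card S * Nat.card φ.ker := by
  set K := S.comap φ
  set ψ : K →+ B := φ.comp K.subtype with hψ
  have hrange : ψ.range = S := by
    ext b
    constructor
    · rintro ⟨⟨a, ha⟩, rfl⟩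
      exact ha
    · intro hb
      obtain ⟨a, rfl⟩ := hφ b
      exact ⟨⟨a, hb⟩, rfl⟩
  have hker : Nat.card ψ.ker = Nat.card φ.ker := by
    refine Nat.card_congr ⟨fun x => ⟨x.1.1, x.2⟩, fun y => ⟨⟨y.1, ?_⟩, y.2⟩, fun x => rfl,
      fun y => rfl⟩
    have h0 : φ y.1 = 0 := y.2
    show φ y.1 ∈ S
    rw [h0]; exact S.zero_mem
  have := card_ker_mul_card_range ψ
  rw [hrange, hker] at this
  rw [← this, mul_comm]

lemma card_pi_addSubgroup {I : Type*} [Fintype I] {G : Type*} [AddCommGroup G]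
    (F : I → AddSubgroup G) :
    Nat.card (AddSubgroup.pi Set.univ F) = ∏ i, Nat.card (F i) := by
  rw [← Nat.card_pi]
  exact Nat.card_congr
    ⟨fun g i => ⟨g.1 i, g.2 i (Set.mem_univ i)⟩,
     fun h => ⟨fun i => (h i).1, fun i _ => (h i).2⟩,
     fun g => rfl, fun h => rfl⟩

lemma card_twoG_mul_card_torsion2 (G : Type*) [AddCommGroup G] [Finite G] :
    Nat.card (twoG G) * Nat.card (torsion2 G) = Nat.card G := by
  have := card_ker_mul_card_range (doubleHom G)
  rw [mul_comm] at this
  exact this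

namespace SGraph

variable {V E : Type*}

lemma zero_isFlow (Γ : SGraph V E) (ω : E → Bool → ℤˣ) (G : Type*) [AddCommGroup G] :
    Γ.IsFlow ω (0 : E → G) := by
  intro v
  simp

/-- The central counting theorem: the number of `G`-flows. -/
theorem card_flows (Γ : SGraph V E) [Fintype V] [Fintype E]
    (ω : E → Bool → ℤˣ) (hω : Γ.IsCompatible ω)
    (G : Type*) [AddCommGroup G] [Finite G] :
    Nat.card {f : E → G // Γ.IsFlow ω f} * Nat.card G ^ (Nat.card V)
      = Nat.card G ^ (Nat.card E + Γ.kb) * Nat.card (torsion2 G) ^ Γ.ku := by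
  haveI : Finite Γ.Components := Quot.finite _
  haveI : Fintype Γ.Components := Fintype.ofFinite _
  set φ := bdry Γ ω G
  set Λ := lam Γ G
  -- flows = kernel of φ
  have hflow : Nat.card {f : E → G // Γ.IsFlow ω f} = Nat.card φ.ker := by
    refine Nat.card_congr (Equiv.subtypeEquivRight fun f => ?_)
    rw [isFlow_iff]
    rfl
  -- component counting
  have hk : Nat.card Γ.Components = Γ.kb + Γ.ku := by
    rw [kb, ku, Nat.card_eq_fintype_card, Nat.card_eq_fintype_card, Nat.card_eq_fintype_card,
      Fintype.card_subtype, Fintype.card_subtype,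
      Finset.card_filter_add_card_filter_not, Finset.card_univ]
  -- card of the constraint subgroup
  have hS : Nat.card (AddSubgroup.pi Set.univ (bSub Γ G)) = Nat.card (twoG G) ^ Γ.ku := by
    rw [card_pi_addSubgroup]
    have heach : ∀ c : Γ.Components, Nat.card (bSub Γ G c)
        = if Γ.IsBalancedComponent c then 1 else Nat.card (twoG G) := by
      intro c
      rw [bSub_apply]
      split_ifs
      · exact AddSubgroup.card_bot
      · rfl
    have hku : Γ.ku = (Finset.univ.filter (fun c => ¬ Γ.IsBalancedComponent c)).card := by
      rw [ku, Nat.card_eq_fintype_card, Fintype.card_subtype]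
    rw [Finset.prod_congr rfl fun c _ => heach c, Finset.prod_ite, Finset.prod_const,
      Finset.prod_const, one_pow, one_mul, hku]
  -- the four counting identities
  have h1 : Nat.card φ.ker * Nat.card φ.range = Nat.card G ^ Nat.card E := by
    rw [card_ker_mul_card_range, Nat.card_fun]
  have h2 : Nat.card φ.range
      = Nat.card (twoG G) ^ Γ.ku * Nat.card Λ.ker := by
    rw [range_bdry Γ ω G hω,
      card_comap_of_surjective Λ (lam_surjective Γ G) _, hS]
  have h3 : Nat.card Λ.ker * Nat.card G ^ (Γ.kb + Γ.ku) = Nat.card G ^ Nat.card V := by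
    have hr : Λ.range = ⊤ := by
      rw [AddMonoidHom.range_eq_top]
      exact lam_surjective Γ G
    have := card_ker_mul_card_range Λ
    rw [hr] at this
    have htop : Nat.card (⊤ : AddSubgroup (Γ.Components → G)) = Nat.card G ^ (Γ.kb + Γ.ku) := by
      rw [← hk, Nat.card_congr AddSubgroup.topEquiv.toEquiv, Nat.card_fun]
    rw [htop] at this
    rw [this, Nat.card_fun]
  -- combine
  have htG : 0 < Nat.card (twoG G) := Nat.card_pos
  have key : (Nat.card φ.ker * Nat.card G ^ Nat.card V) * Nat.card (twoG G) ^ Γ.ku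
      = (Nat.card G ^ (Nat.card E + Γ.kb) * Nat.card (torsion2 G) ^ Γ.ku)
        * Nat.card (twoG G) ^ Γ.ku := by
    calc (Nat.card φ.ker * Nat.card G ^ Nat.card V) * Nat.card (twoG G) ^ Γ.ku
        = (Nat.card φ.ker * (Nat.card Λ.ker * Nat.card G ^ (Γ.kb + Γ.ku)))
            * Nat.card (twoG G) ^ Γ.ku := by rw [h3]
      _ = (Nat.card φ.ker * (Nat.card (twoG G) ^ Γ.ku * Nat.card Λ.ker))
            * Nat.card G ^ (Γ.kb + Γ.ku) := by ring
      _ = (Nat.card φ.ker * Nat.card φ.range) * Nat.card G ^ (Γ.kb + Γ.ku) := by rw [h2]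
      _ = Nat.card G ^ Nat.card E * Nat.card G ^ (Γ.kb + Γ.ku) := by rw [h1]
      _ = Nat.card G ^ (Nat.card E + Γ.kb) * Nat.card G ^ Γ.ku := by
            rw [← pow_add, ← pow_add]; ring_nf
      _ = Nat.card G ^ (Nat.card E + Γ.kb)
            * (Nat.card (twoG G) * Nat.card (torsion2 G)) ^ Γ.ku := by
            rw [card_twoG_mul_card_torsion2]
      _ = (Nat.card G ^ (Nat.card E + Γ.kb) * Nat.card (torsion2 G) ^ Γ.ku)
            * Nat.card (twoG G) ^ Γ.ku := by rw [mul_pow]; ring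
  have := Nat.eq_of_mul_eq_mul_right (pow_pos htG Γ.ku) key
  rw [hflow]
  exact this

end SGraph

end CountLayer

noncomputable section FinalLayer

lemma zmod3_double_iff : ∀ x : ZMod 3, x + x = 0 ↔ x = 0 := by decide

lemma torsion2_zmod3 : torsion2 (ZMod 3) = ⊥ := by
  ext x
  rw [AddSubgroup.mem_bot]
  show x + x = 0 ↔ x = 0
  exact zmod3_double_iff x

namespace SGraph

variable {V E : Type*}

lemma card_le_card_add_kb (Γ : SGraph V E) [Fintype V] [Fintype E]
    (ω : E → Bool → ℤˣ) (hω : Γ.IsCompatible ω) :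
    Nat.card V ≤ Nat.card E + Γ.kb := by
  have h := card_flows Γ ω hω (ZMod 3)
  have h3 : Nat.card (ZMod 3) = 3 := by simp
  have ht : Nat.card (torsion2 (ZMod 3)) = 1 := by
    rw [torsion2_zmod3]; exact AddSubgroup.card_bot
  rw [h3, ht, one_pow, mul_one] at h
  have hN : 1 ≤ Nat.card {f : E → ZMod 3 // Γ.IsFlow ω f} := by
    have : Nonempty {f : E → ZMod 3 // Γ.IsFlow ω f} := ⟨⟨0, Γ.zero_isFlow ω _⟩⟩
    exact Nat.one_le_iff_ne_zero.mpr Nat.card_pos.ne'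
  have hpow : 3 ^ Nat.card V ≤ 3 ^ (Nat.card E + Γ.kb) := by
    calc 3 ^ Nat.card V ≤ Nat.card {f : E → ZMod 3 // Γ.IsFlow ω f} * 3 ^ Nat.card V :=
          Nat.le_mul_of_pos_left _ hN
    _ = 3 ^ (Nat.card E + Γ.kb) := h
  exact (Nat.pow_le_pow_iff_right (by norm_num)).mp hpow

/-- The `ℚ`-valued count of flows. -/
lemma card_flows_q (Γ : SGraph V E) [Fintype V] [Fintype E]
    (ω : E → Bool → ℤˣ) (hω : Γ.IsCompatible ω)
    (G : Type*) [AddCommGroup G] [Finite G] :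
    (Nat.card {f : E → G // Γ.IsFlow ω f} : ℚ)
      = (Nat.card G : ℚ) ^ ((Nat.card E + Γ.kb) - Nat.card V)
        * ((Nat.card G : ℚ) / (Nat.card (twoG G) : ℚ)) ^ Γ.ku := by
  have h := card_flows Γ ω hω G
  have hle : Nat.card V ≤ Nat.card E + Γ.kb := Γ.card_le_card_add_kb ω hω
  have hGpos : (0 : ℚ) < (Nat.card G : ℚ) := by exact_mod_cast Nat.card_pos
  have htGpos : (0 : ℚ) < (Nat.card (twoG G) : ℚ) := by exact_mod_cast Nat.card_pos
  have hdiv : (Nat.card G : ℚ) / (Nat.card (twoG G) : ℚ) = (Nat.card (torsion2 G) : ℚ) := by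
    rw [div_eq_iff htGpos.ne']
    have := card_twoG_mul_card_torsion2 G
    have hq : ((Nat.card (twoG G) * Nat.card (torsion2 G) : ℕ) : ℚ) = (Nat.card G : ℚ) := by
      exact_mod_cast congrArg (Nat.cast : ℕ → ℚ) this
    push_cast at hq
    rw [← hq]; ring
  rw [hdiv]
  have hQ : (Nat.card {f : E → G // Γ.IsFlow ω f} : ℚ) * (Nat.card G : ℚ) ^ Nat.card V
      = (Nat.card G : ℚ) ^ (Nat.card E + Γ.kb) * (Nat.card (torsion2 G) : ℚ) ^ Γ.ku := by
    exact_mod_cast congrArg (Nat.cast : ℕ → ℚ) h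
  have hgne : (Nat.card G : ℚ) ^ Nat.card V ≠ 0 := pow_ne_zero _ hGpos.ne'
  apply mul_right_cancel₀ hgne
  rw [hQ]
  have hsplit : (Nat.card G : ℚ) ^ ((Nat.card E + Γ.kb) - Nat.card V)
      * (Nat.card G : ℚ) ^ Nat.card V = (Nat.card G : ℚ) ^ (Nat.card E + Γ.kb) := by
    rw [← pow_add, Nat.sub_add_cancel hle]
  rw [← hsplit]; ring

lemma sum_support_subset {G : Type*} [AddCommMonoid G] [Fintype E] (A : Finset E)
    (B : E → G) (hB : ∀ e ∉ A, B e = 0) :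
    ∑ e : ↥(A : Set E), B e.1 = ∑ e : E, B e := by
  rw [← Finset.sum_subtype A (fun x => by simp) B]
  exact Finset.sum_subset (Finset.subset_univ A) (fun e _ he => hB e he)

lemma isFlow_restrict_iff {G : Type*} [AddCommGroup G] [Fintype E] (Γ : SGraph V E)
    (ω : E → Bool → ℤˣ) (A : Finset E) (f : E → G) (hf : ∀ e ∉ A, f e = 0) :
    Γ.IsFlow ω f ↔
      (Γ.restrict (A : Set E)).IsFlow (fun e b => ω e.1 b) (fun e => f e.1) := by
  show (∀ v : V, _) ↔ (∀ v : V, _)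
  refine forall_congr' fun v => ?_
  rw [finsum_eq_sum_of_fintype, finsum_eq_sum_of_fintype]
  have hs := sum_support_subset (E := E) A (fun e =>
      (if Γ.endpt e true = v then (ω e true : ℤ) • f e else 0) +
      (if Γ.endpt e false = v then (ω e false : ℤ) • f e else 0))
    (fun e he => by rw [hf e he]; simp)
  rw [← hs]
  exact Iff.rfl

lemma card_flows_supported {G : Type*} [AddCommGroup G] [Fintype E] (Γ : SGraph V E)
    (ω : E → Bool → ℤˣ) (A : Finset E) :
    Nat.card {f : E → G // Γ.IsFlow ω f ∧ ∀ e ∉ A, f e = 0}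
      = Nat.card {g : ↥(A : Set E) → G //
          (Γ.restrict (A : Set E)).IsFlow (fun e b => ω e.1 b) g} := by
  refine Nat.card_congr ⟨fun f => ⟨fun e => f.1 e.1, ?_⟩,
    fun g => ⟨fun e => if h : e ∈ A then g.1 ⟨e, h⟩ else 0, ?_, ?_⟩, ?_, ?_⟩
  · exact (isFlow_restrict_iff Γ ω A f.1 f.2.2).mp f.2.1
  · refine (isFlow_restrict_iff Γ ω A _ (fun e he => dif_neg he)).mpr ?_
    have hg : (fun e : ↥(A : Set E) => if h : e.1 ∈ A then g.1 ⟨e.1, h⟩ else 0) = g.1 := by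
      funext e
      exact dif_pos e.2
    rw [hg]
    exact g.2
  · exact fun e he => dif_neg he
  · intro f
    refine Subtype.ext (funext fun e => ?_)
    dsimp only
    by_cases h : e ∈ A
    · exact dif_pos h
    · rw [dif_neg h, f.2.2 e h]
  · intro g
    refine Subtype.ext (funext fun e => ?_)
    dsimp only
    exact dif_pos e.2

end SGraph

end FinalLayer

noncomputable section InclExcl

lemma finset_subset_compl_comm {α : Type*} [Fintype α] [DecidableEq α]
    (s B : Finset α) : s ⊆ Bᶜ ↔ B ⊆ sᶜ := by
  constructor <;> intro h x hx <;> rw [Finset.mem_compl] <;> intro hc <;>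
    exact absurd hx (Finset.mem_compl.mp (h hc))

lemma sum_neg_one_pow_subsets {α : Type*} [Fintype α] [DecidableEq α] (s : Finset α) :
    (∑ A : Finset α, (-1 : ℚ) ^ (Fintype.card α - A.card) * (if s ⊆ A then 1 else 0))
      = if s = Finset.univ then 1 else 0 := by
  have step1 : ∀ A : Finset α,
      (-1 : ℚ) ^ (Fintype.card α - A.card) * (if s ⊆ A then 1 else 0)
        = if s ⊆ A then (-1 : ℚ) ^ (Aᶜ.card) else 0 := by
    intro A
    rw [Finset.card_compl]
    split_ifs <;> ring
  rw [Finset.sum_congr rfl fun A _ => step1 A]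
  have step2 : (∑ A : Finset α, if s ⊆ A then (-1 : ℚ) ^ (Aᶜ.card) else 0)
      = ∑ B : Finset α, if B ⊆ sᶜ then (-1 : ℚ) ^ B.card else 0 := by
    refine Fintype.sum_equiv ⟨fun A => Aᶜ, fun A => Aᶜ, fun A => by simp, fun A => by simp⟩
      _ _ fun A => ?_
    simp only [Equiv.coe_fn_mk]
    congr 1
    rw [eq_iff_iff]
    have h1 : s ⊆ A ↔ s ⊆ Aᶜᶜ := by rw [compl_compl]
    exact h1.trans (finset_subset_compl_comm s Aᶜ)
  rw [step2]
  have hfilter : Finset.univ.filter (fun B : Finset α => B ⊆ sᶜ) = sᶜ.powerset := by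
    ext B
    simp [Finset.mem_powerset]
  have step3 : (∑ B : Finset α, if B ⊆ sᶜ then (-1 : ℚ) ^ B.card else 0)
      = ∑ B ∈ sᶜ.powerset, (-1 : ℚ) ^ B.card := by
    rw [← Finset.sum_filter, hfilter]
  rw [step3]
  have step4 : (∑ B ∈ sᶜ.powerset, (-1 : ℚ) ^ B.card)
      = if sᶜ = ∅ then 1 else 0 := by
    have hz := Finset.sum_powerset_neg_one_pow_card (x := sᶜ)
    have := congrArg (Int.cast : ℤ → ℚ) hz
    push_cast at this
    rw [this]
  rw [step4]
  simp [Finset.compl_eq_empty_iff]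

/-- Inclusion–exclusion over supports. -/
lemma incl_excl_card {α X : Type*} [Fintype α] [DecidableEq α] [Fintype X]
    (P : X → Prop) (supp : X → Finset α) :
    ((Finset.univ.filter (fun f : X => P f ∧ supp f = Finset.univ)).card : ℚ)
      = ∑ A : Finset α, (-1 : ℚ) ^ (Fintype.card α - A.card) *
          ((Finset.univ.filter (fun f : X => P f ∧ supp f ⊆ A)).card : ℚ) := by
  have expand : ∀ A : Finset α,
      ((Finset.univ.filter (fun f : X => P f ∧ supp f ⊆ A)).card : ℚ)
        = ∑ f : X, (if P f then 1 else 0) * (if supp f ⊆ A then 1 else 0) := by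
    intro A
    rw [Finset.card_filter]
    push_cast
    refine Finset.sum_congr rfl fun f _ => ?_
    split_ifs with h1 <;> simp_all
  rw [Finset.sum_congr rfl fun A _ => by rw [expand A]]
  rw [Finset.sum_congr rfl fun A (_ : A ∈ Finset.univ) =>
    Finset.mul_sum Finset.univ (fun f : X => (if P f then (1:ℚ) else 0) * (if supp f ⊆ A then 1 else 0)) ((-1 : ℚ) ^ (Fintype.card α - A.card))]
  rw [Finset.sum_comm]
  have inner : ∀ f : X,
      (∑ A : Finset α, (-1 : ℚ) ^ (Fintype.card α - A.card) *
        ((if P f then 1 else 0) * (if supp f ⊆ A then 1 else 0)))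
      = (if P f then 1 else 0) * (if supp f = Finset.univ then 1 else 0) := by
    intro f
    by_cases hP : P f
    · simp only [if_pos hP, one_mul]
      exact sum_neg_one_pow_subsets (supp f)
    · simp [if_neg hP]
  rw [Finset.sum_congr rfl fun f _ => inner f, Finset.card_filter]
  push_cast
  refine Finset.sum_congr rfl fun f _ => ?_
  split_ifs with h1 <;> simp_all

end InclExcl

section Assembly

open SGraph

theorem final_assembly
    (V E : Type) [Finite V] [Fintype E] (Γ : SGraph V E)
    (ω : E → Bool → ℤˣ) (hω : Γ.IsCompatible ω)
    (G : Type) [AddCommGroup G] [Finite G] :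
    (Nat.card {f : E → G // Γ.IsFlow ω f ∧ ∀ e : E, f e ≠ 0} : ℚ) =
      ∑ A : Finset E,
        (-1 : ℚ) ^ (Fintype.card E - A.card) *
          ((Nat.card G : ℚ) ^ ((A.card + (Γ.restrict (A : Set E)).kb) - Nat.card V) *
            ((Nat.card G : ℚ) / (Nat.card (twoG G) : ℚ)) ^ (Γ.restrict (A : Set E)).ku) := by
  haveI : Fintype V := Fintype.ofFinite V
  haveI : Fintype G := Fintype.ofFinite G
  have hsub : ∀ (f : E → G) (A : Finset E),
      (Finset.univ.filter (fun e => f e ≠ 0) ⊆ A) ↔ (∀ e ∉ A, f e = 0) := by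
    intro f A
    constructor
    · intro h e heA
      by_contra h0
      exact heA (h (Finset.mem_filter.mpr ⟨Finset.mem_univ e, h0⟩))
    · intro h e he
      rcases Finset.mem_filter.mp he with ⟨-, h0⟩
      by_contra heA
      exact h0 (h e heA)
  have huniv : ∀ f : E → G,
      ((Finset.univ.filter (fun e => f e ≠ 0)) = Finset.univ) ↔ (∀ e : E, f e ≠ 0) := by
    intro f
    rw [Finset.eq_univ_iff_forall]
    constructor
    · intro h e
      exact (Finset.mem_filter.mp (h e)).2
    · intro h e
      exact Finset.mem_filter.mpr ⟨Finset.mem_univ e, h e⟩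
  have main := incl_excl_card (fun f : E → G => Γ.IsFlow ω f)
    (fun f => Finset.univ.filter (fun e => f e ≠ 0))
  have hL : (Nat.card {f : E → G // Γ.IsFlow ω f ∧ ∀ e : E, f e ≠ 0} : ℚ)
      = ((Finset.univ.filter (fun f : E → G => Γ.IsFlow ω f ∧
          (Finset.univ.filter (fun e => f e ≠ 0)) = Finset.univ)).card : ℚ) := by
    congr 1
    rw [Nat.card_eq_fintype_card, Fintype.card_subtype]
    congr 1
    apply Finset.filter_congr
    intro f _
    exact and_congr_right fun _ => (huniv f).symm
  have hterm : ∀ A : Finset E,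
      ((Finset.univ.filter (fun f : E → G => Γ.IsFlow ω f ∧
          (Finset.univ.filter (fun e => f e ≠ 0)) ⊆ A)).card : ℚ)
        = (Nat.card G : ℚ) ^ ((A.card + (Γ.restrict (A : Set E)).kb) - Nat.card V) *
            ((Nat.card G : ℚ) / (Nat.card (twoG G) : ℚ)) ^ (Γ.restrict (A : Set E)).ku := by
    intro A
    have h1 : (Finset.univ.filter (fun f : E → G => Γ.IsFlow ω f ∧
        (Finset.univ.filter (fun e => f e ≠ 0)) ⊆ A)).card
        = Nat.card {f : E → G // Γ.IsFlow ω f ∧ ∀ e ∉ A, f e = 0} := by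
      rw [Nat.card_eq_fintype_card, Fintype.card_subtype]
      congr 1
      apply Finset.filter_congr
      intro f _
      exact and_congr_right fun _ => hsub f A
    rw [h1, card_flows_supported Γ ω A,
      card_flows_q (Γ.restrict (A : Set E)) (fun e b => ω e.1 b) (fun e => hω e.1) G,
      Nat.card_coe_set_eq, Set.ncard_coe_finset]
  rw [hL, main]
  refine Finset.sum_congr rfl fun A _ => ?_
  rw [hterm A]

end Assembly


end AuxProofs

section Statement

open SGraph

/-- Theorem 5.2: subset expansion for the number of nowhere-zero `G`-flows. -/
theorem card_nowhereZero_flows_subset_expansion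
    (V E : Type) [Finite V] [Fintype E] (Γ : SGraph V E)
    (ω : E → Bool → ℤˣ) (hω : Γ.IsCompatible ω)
    (G : Type) [AddCommGroup G] [Finite G] :
    (Nat.card {f : E → G // Γ.IsFlow ω f ∧ ∀ e : E, f e ≠ 0} : ℚ) =
      ∑ A : Finset E,
        (-1 : ℚ) ^ (Fintype.card E - A.card) *
          ((Nat.card G : ℚ) ^ ((A.card + (Γ.restrict (A : Set E)).kb) - Nat.card V) *
            ((Nat.card G : ℚ) / (Nat.card (twoG G) : ℚ)) ^ (Γ.restrict (A : Set E)).ku) := by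
  exact final_assembly V E Γ ω hω G

end Statement
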